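/- Define φ(s₀) = −s₀³/3 − 9s₀ + (9 + 6s₀² − 3s₀⁴) arctan(s₀) for s₀ > 0. Then there exists a unique s̄₀ > 0 with φ(s̄₀) = 0, and φ(s₀) < 0 for all s₀ > s̄₀; moreover 1.02 < s̄₀ < 1.03. -/

import Mathlib

open Real

/- ### Auxiliary lemmas -/

lemma aux_arctan_le_self {x : ℝ} (hx : 0 ≤ x) : arctan x ≤ x := by
  have hmono : Monotone (fun y : ℝ => y - arctan y) := by
    apply monotone_of_deriv_nonneg
    · exact differentiable_id.sub Real.differentiable_arctan
    · intro y
      have h : HasDerivAt (fun y : ℝ => y - arctan y) (1 - 1/(1+y^2)) y :=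
        (hasDerivAt_id y).sub (Real.hasDerivAt_arctan y)
      rw [h.deriv]
      have : (0:ℝ) < 1 + y^2 := by positivity
      rw [sub_nonneg, div_le_one this]; nlinarith
  have := hmono hx
  simpa using this

lemma aux_sub_cube_le_arctan {x : ℝ} (hx : 0 ≤ x) : x - x^3/3 ≤ arctan x := by
  have hmono : Monotone (fun y : ℝ => arctan y - (y - y^3/3)) := by
    apply monotone_of_deriv_nonneg
    · exact Real.differentiable_arctan.sub (differentiable_id.sub ((differentiable_id.pow 3).div_const 3))
    · intro y
      have h : HasDerivAt (fun y : ℝ => arctan y - (y - y^3/3)) (1/(1+y^2) - (1 - (3*y^2)/3)) y := by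
        exact (Real.hasDerivAt_arctan y).sub ((hasDerivAt_id y).sub (((hasDerivAt_pow 3 y).div_const 3)))
      rw [h.deriv]
      have h1 : (0:ℝ) < 1 + y^2 := by positivity
      rw [sub_nonneg]
      rw [le_div_iff₀ h1]
      nlinarith [sq_nonneg (y^2)]
  have := hmono hx
  simpa using this

lemma aux_phi_deriv (x : ℝ) :
    HasDerivAt (fun s : ℝ => -s ^ 3 / 3 - 9 * s + (9 + 6 * s ^ 2 - 3 * s ^ 4) * arctan s)
      (-4*x^2 + 12*x*(1-x^2)*arctan x) x := by
  have hA : HasDerivAt (fun s : ℝ => -s ^ 3 / 3 - 9 * s) (-(3*x^2)/3 - 9) x := by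
    have h3 : HasDerivAt (fun s : ℝ => s^3) (3*x^2) x := by
      simpa using hasDerivAt_pow 3 x
    simpa using (h3.fun_neg.div_const 3).fun_sub ((hasDerivAt_id x).const_mul 9)
  have hB : HasDerivAt (fun s : ℝ => 9 + 6 * s ^ 2 - 3 * s ^ 4) (12*x - 12*x^3) x := by
    have h2 : HasDerivAt (fun s : ℝ => s^2) (2*x) x := by simpa using hasDerivAt_pow 2 x
    have h4 : HasDerivAt (fun s : ℝ => s^4) (4*x^3) x := by simpa using hasDerivAt_pow 4 x
    have := ((h2.const_mul 6).const_add 9).fun_sub (h4.const_mul 3)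
    exact this.congr_deriv (by ring)
  have hC := hB.fun_mul (Real.hasDerivAt_arctan x)
  have := hA.fun_add hC
  refine this.congr_deriv ?_
  have h1 : (0:ℝ) < 1 + x^2 := by positivity
  field_simp
  ring

noncomputable def auxH : ℝ → ℝ := fun x => arctan x - (x^3/3 + 9*x)/(9 + 6*x^2 - 3*x^4)

noncomputable def auxE : ℝ → ℝ := fun x =>
  1/(1+x^2) - ((x^2+9)*(9+6*x^2-3*x^4) - (x^3/3+9*x)*(12*x-12*x^3))/(9+6*x^2-3*x^4)^2

lemma auxD_pos {x : ℝ} (h0 : 0 ≤ x) (h1 : x ≤ 1) : (0:ℝ) < 9 + 6*x^2 - 3*x^4 := by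
  nlinarith [sq_nonneg x, sq_nonneg (x^2), pow_le_one₀ h0 h1 (n := 4), sq_nonneg (1 - x^2)]

lemma auxH_hasDeriv {x : ℝ} (h0 : 0 ≤ x) (h1 : x ≤ 1) : HasDerivAt auxH (auxE x) x := by
  have hD := auxD_pos h0 h1
  have hu : HasDerivAt (fun s : ℝ => s^3/3 + 9*s) (x^2 + 9) x := by
    have h3 : HasDerivAt (fun s : ℝ => s^3) (3*x^2) x := by simpa using hasDerivAt_pow 3 x
    have := (h3.div_const 3).fun_add ((hasDerivAt_id x).const_mul 9)
    exact this.congr_deriv (by ring)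
  have hB : HasDerivAt (fun s : ℝ => 9 + 6 * s ^ 2 - 3 * s ^ 4) (12*x - 12*x^3) x := by
    have h2 : HasDerivAt (fun s : ℝ => s^2) (2*x) x := by simpa using hasDerivAt_pow 2 x
    have h4 : HasDerivAt (fun s : ℝ => s^4) (4*x^3) x := by simpa using hasDerivAt_pow 4 x
    have := ((h2.const_mul 6).const_add 9).fun_sub (h4.const_mul 3)
    exact this.congr_deriv (by ring)
  have := (Real.hasDerivAt_arctan x).fun_sub (hu.fun_div hB hD.ne')
  exact this

lemma auxE_eq {x : ℝ} (h0 : 0 ≤ x) (h1 : x ≤ 1) :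
    auxE x = 8*x^2*((x^2)^3 - 15*(x^2)^2 - 7*x^2 + 9) / ((1+x^2)*(9+6*x^2-3*x^4)^2) := by
  have hD := auxD_pos h0 h1
  have h2 : (0:ℝ) < 1 + x^2 := by positivity
  unfold auxE
  rw [div_sub_div _ _ h2.ne' (pow_ne_zero 2 hD.ne'), div_eq_div_iff (by positivity) (by positivity)]
  ring

lemma auxH_contOn {a b : ℝ} (ha : 0 ≤ a) (hb : b ≤ 1) :
    ContinuousOn auxH (Set.Icc a b) := by
  apply ContinuousOn.sub Real.continuous_arctan.continuousOn
  apply ContinuousOn.div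
  · exact (Continuous.continuousOn (by continuity))
  · exact (Continuous.continuousOn (by continuity))
  · intro x hx
    exact (auxD_pos (le_trans ha hx.1) (le_trans hx.2 hb)).ne'

lemma auxH_zero : auxH 0 = 0 := by
  unfold auxH; norm_num

lemma auxH_one_pos : 0 < auxH 1 := by
  unfold auxH
  rw [arctan_one]
  have := Real.pi_gt_d6
  norm_num
  linarith

lemma auxH_pos {s : ℝ} (hs0 : 0 < s) (hs1 : s ≤ 1) : 0 < auxH s := by
  by_cases hg : 0 ≤ (s^2)^3 - 15*(s^2)^2 - 7*s^2 + 9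
  · -- H strictly increasing on [0, s]
    have hm : StrictMonoOn auxH (Set.Icc 0 s) := by
      apply strictMonoOn_of_deriv_pos (convex_Icc 0 s) (auxH_contOn le_rfl hs1)
      intro x hx
      rw [interior_Icc] at hx
      obtain ⟨hx0, hxs⟩ := hx
      have h0 : (0:ℝ) ≤ x := hx0.le
      have h1 : x ≤ 1 := le_trans hxs.le hs1
      rw [(auxH_hasDeriv h0 h1).deriv, auxE_eq h0 h1]
      apply div_pos
      · have hb : (0:ℝ) < 15*(x^2+s^2) + 7 - (x^4+x^2*s^2+s^4) := by
          nlinarith [pow_le_one₀ h0 h1 (n := 4), pow_le_one₀ (le_trans h0 hxs.le) hs1 (n := 4),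
            pow_le_one₀ h0 h1 (n := 2), pow_le_one₀ (le_trans h0 hxs.le) hs1 (n := 2),
            sq_nonneg (x*s), mul_nonneg (sq_nonneg x) (sq_nonneg s)]
        have key := mul_pos (by nlinarith : (0:ℝ) < s^2 - x^2) hb
        have hgx : 0 < (x^2)^3 - 15*(x^2)^2 - 7*x^2 + 9 := by nlinarith [key]
        have hx2p : (0:ℝ) < x^2 := pow_pos hx0 2
        nlinarith [mul_pos hx2p hgx]
      · have := auxD_pos h0 h1
        positivity
    have := hm (Set.left_mem_Icc.mpr hs0.le) (Set.right_mem_Icc.mpr hs0.le) hs0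
    rwa [auxH_zero] at this
  · rcases eq_or_lt_of_le hs1 with rfl | hs1'
    · exact auxH_one_pos
    · have hm : StrictAntiOn auxH (Set.Icc s 1) := by
        apply strictAntiOn_of_deriv_neg (convex_Icc s 1) (auxH_contOn hs0.le le_rfl)
        intro x hx
        rw [interior_Icc] at hx
        obtain ⟨hxs, hx1⟩ := hx
        have h0 : (0:ℝ) ≤ x := le_trans hs0.le hxs.le
        have h1 : x ≤ 1 := hx1.le
        rw [(auxH_hasDeriv h0 h1).deriv, auxE_eq h0 h1]
        apply div_neg_of_neg_of_pos
        · push_neg at hg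
          have hxp : (0:ℝ) < x := lt_trans hs0 hxs
          have hb : (0:ℝ) < 15*(x^2+s^2) + 7 - (x^4+x^2*s^2+s^4) := by
            nlinarith [pow_le_one₀ h0 h1 (n := 4), pow_le_one₀ hs0.le hs1 (n := 4),
              pow_le_one₀ h0 h1 (n := 2), pow_le_one₀ hs0.le hs1 (n := 2),
              sq_nonneg (x*s), mul_nonneg (sq_nonneg x) (sq_nonneg s)]
          have key := mul_pos (by nlinarith : (0:ℝ) < x^2 - s^2) hb
          have hgx : (x^2)^3 - 15*(x^2)^2 - 7*x^2 + 9 < 0 := by nlinarith [key]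
          have hx2p : (0:ℝ) < x^2 := pow_pos hxp 2
          nlinarith [mul_pos hx2p (neg_pos.mpr hgx)]
        · have := auxD_pos h0 h1
          positivity
      have := hm (Set.left_mem_Icc.mpr hs1) (Set.right_mem_Icc.mpr hs1) hs1'
      exact lt_trans auxH_one_pos this

lemma aux_arctan_102 : arctan 1.02 = π/4 + arctan (1/101) := by
  have h := Real.arctan_add (x := 1) (y := 1/101) (by norm_num)
  rw [Real.arctan_one] at h
  rw [show ((1:ℝ) + 1/101)/(1 - 1*(1/101)) = 1.02 by norm_num] at h
  linarith

lemma aux_arctan_103 : arctan 1.03 = π/4 + arctan (3/203) := by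
  have h := Real.arctan_add (x := 1) (y := 3/203) (by norm_num)
  rw [Real.arctan_one] at h
  rw [show ((1:ℝ) + 3/203)/(1 - 1*(3/203)) = 1.03 by norm_num] at h
  linarith

lemma aux_lb_102 : (0.7952986:ℝ) < arctan 1.02 := by
  rw [aux_arctan_102]
  have h1 : (1:ℝ)/101 - (1/101)^3/3 ≤ arctan (1/101) := aux_sub_cube_le_arctan (by norm_num)
  have h2 := Real.pi_gt_d6
  norm_num at h1 ⊢
  linarith

lemma aux_ub_103 : arctan 1.03 < 0.8001766 := by
  rw [aux_arctan_103]
  have h1 : arctan ((3:ℝ)/203) ≤ 3/203 := aux_arctan_le_self (by norm_num)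
  have h2 := Real.pi_lt_d6
  norm_num at h1 ⊢
  linarith

theorem stmt_13 (φ : ℝ → ℝ)
    (hφ : ∀ s, φ s = -s ^ 3 / 3 - 9 * s + (9 + 6 * s ^ 2 - 3 * s ^ 4) * arctan s) :
    ∃ s₀ : ℝ, 1.02 < s₀ ∧ s₀ < 1.03 ∧ φ s₀ = 0 ∧
      (∀ s : ℝ, 0 < s → φ s = 0 → s = s₀) ∧
      (∀ s : ℝ, s₀ < s → φ s < 0) := by
  have hfun : φ = fun s : ℝ => -s ^ 3 / 3 - 9 * s + (9 + 6 * s ^ 2 - 3 * s ^ 4) * arctan s :=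
    funext hφ
  have hderiv : ∀ x : ℝ, HasDerivAt φ (-4*x^2 + 12*x*(1-x^2)*arctan x) x := by
    intro x; rw [hfun]; exact aux_phi_deriv x
  have hcont : Continuous φ := by
    rw [hfun]
    exact (((continuous_pow 3).neg.div_const 3).sub (continuous_const.mul continuous_id)).add
      (((continuous_const.add (continuous_const.mul (continuous_pow 2))).sub
        (continuous_const.mul (continuous_pow 4))).mul Real.continuous_arctan)
  -- φ is strictly decreasing on [1, ∞)
  have hanti : StrictAntiOn φ (Set.Ici (1:ℝ)) := by
    apply strictAntiOn_of_deriv_neg (convex_Ici 1) hcont.continuousOn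
    intro x hx
    rw [interior_Ici] at hx
    rw [(hderiv x).deriv]
    have hx0 : (0:ℝ) < x := lt_trans one_pos hx
    have ha : 0 < arctan x := by
      have := Real.arctan_strictMono hx0
      simpa using this
    have h1 : 0 < x * (x^2 - 1) * arctan x :=
      mul_pos (mul_pos hx0 (by nlinarith [hx.out] : (0:ℝ) < x^2 - 1)) ha
    nlinarith [pow_pos hx0 2]
  -- φ is positive on (0, 1]
  have hpos : ∀ s : ℝ, 0 < s → s ≤ 1 → 0 < φ s := by
    intro s hs0 hs1
    have hd := auxD_pos hs0.le hs1
    have hφs : φ s = (9 + 6*s^2 - 3*s^4) * auxH s := by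
      rw [hφ]; unfold auxH; rw [mul_sub, mul_div_cancel₀ _ hd.ne']; ring
    rw [hφs]
    exact mul_pos hd (auxH_pos hs0 hs1)
  -- numeric signs at 1.02 and 1.03
  have h102 : 0 < φ 1.02 := by
    rw [hφ]
    have := aux_lb_102
    nlinarith [this]
  have h103 : φ 1.03 < 0 := by
    rw [hφ]
    have := aux_ub_103
    have hpos' : 0 < arctan 1.03 := by
      have := Real.arctan_strictMono (show (0:ℝ) < 1.03 by norm_num)
      simpa using this
    nlinarith [this, hpos']
  -- existence of the root via IVT
  obtain ⟨s₀, hmem, hroot⟩ := intermediate_value_Ioo' (by norm_num : (1.02:ℝ) ≤ 1.03)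
    hcont.continuousOn (Set.mem_Ioo.mpr ⟨h103, h102⟩)
  obtain ⟨hs₀l, hs₀r⟩ := hmem
  have hs₀1 : (1:ℝ) < s₀ := by linarith
  refine ⟨s₀, hs₀l, hs₀r, hroot, ?_, ?_⟩
  · intro s hs hzero
    rcases lt_trichotomy s s₀ with hlt | heq | hgt
    · rcases le_or_gt s 1 with h1 | h1
      · exact absurd hzero (ne_of_gt (hpos s hs h1))
      · have := hanti (Set.mem_Ici.mpr h1.le) (Set.mem_Ici.mpr hs₀1.le) hlt
        rw [hzero, hroot] at this
        exact absurd this (lt_irrefl 0)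
    · exact heq
    · have := hanti (Set.mem_Ici.mpr hs₀1.le) (Set.mem_Ici.mpr (by linarith)) hgt
      rw [hzero, hroot] at this
      exact absurd this (lt_irrefl 0)
  · intro s hs
    have := hanti (Set.mem_Ici.mpr hs₀1.le) (Set.mem_Ici.mpr (by linarith)) hs
    rwa [hroot] at this
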